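/- arXiv:2006.11786 — 5 statements merged into one kernel-verified Lean document; each statement's English description precedes it below -/
import Mathlib

section
/- The reduced coproduct Δ' (Δ minus the primitive part x ⊗ ∅ + ∅ ⊗ x) on ℂ(P_dis(Ξ_A)) is conilpotent: for every element U ∪ {Iᵢ} of Ξ_A there exists a positive integer m with (Δ')^m (U ∪ {Iᵢ}) = 0. -/
open scoped Classical

namespace SetHopf

/-- Basis elements: families of pairs `(Iᵢ, Jᵢ)` of a block `Iᵢ ⊆ A` together with its
collapsed classes `Jᵢ ⊆ P(A)` — the elements of `P_dis(Ξ_A)` (with `Ξ_A` embedded as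
singleton families). -/
abbrev El (α : Type*) := Finset (Finset α × Finset (Finset α))

variable {α : Type*} [Fintype α] [DecidableEq α]

/-- Reversion map: union of a family of subsets. -/
def R (S : Finset (Finset α)) : Finset α := S.sup id

/-- `x` is a genuine element of `P_dis(Ξ_A)`. -/
def isEl (x : El α) : Prop :=
  (∀ p ∈ x, ∀ q ∈ x, p ≠ q → Disjoint (p.1 ∪ R p.2) (q.1 ∪ R q.2)) ∧
  (∀ p ∈ x, Disjoint p.1 (R p.2)) ∧
  (∀ p ∈ x, ∀ s ∈ p.2, ∀ t ∈ p.2, s ≠ t → Disjoint s t)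

/-- Quotient of one block by a sub-element, with the reversion `R₁` applied (induced
quotient): `ind{(Iᵢ ∪ Jᵢ)/(K_λ ∪ L_λ)} = (Iᵢ \ K) ∪ (Jᵢ \ L) ∪ {K_λ ∪ R(L_λ)}`. -/
def blockQuot (b : Finset α × Finset (Finset α)) (y : El α) :
    Finset α × Finset (Finset α) :=
  (b.1 \ (y.filter (fun p => p.1 ⊆ b.1 ∧ p.2 ⊆ b.2)).sup Prod.fst,
    (b.2 \ (y.filter (fun p => p.1 ⊆ b.1 ∧ p.2 ⊆ b.2)).sup Prod.snd) ∪
      (y.filter (fun p => p.1 ⊆ b.1 ∧ p.2 ⊆ b.2)).image (fun p => p.1 ∪ R p.2))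

/-- The induced quotient `ind{x/(K_λ ∪ L_λ)}`, computed blockwise. -/
def quotEl (x y : El α) : El α := x.image (fun b => blockQuot b y)

/-- Admissible subpartitions, as in Definition 3.1. -/
def admissible (x y : El α) : Prop :=
  isEl y ∧ y.Nonempty ∧
  (∀ p ∈ y, ∃ b ∈ x, p.1 ⊆ b.1 ∧ p.2 ⊆ b.2 ∧ p.1 ≠ b.1 ∧ p.2 ≠ b.2) ∧
  y.sup Prod.snd = x.sup Prod.snd

/-- Structure coefficients of the reduced coproduct `Δ'` (the coproduct without the
primitive part `x⊗∅ + ∅⊗x`). -/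
noncomputable def delta' (x : El α) (p : El α × El α) : ℂ :=
  if admissible x p.1 ∧ p.2 = quotEl x p.1 then 1 else 0

/-- Coefficients of the iterated reduced coproduct
`(Δ')^m = (Δ'⊗id⊗⋯⊗id)(Δ')^{m-1}`: `deltaPow m x l` is the coefficient of the
basis tensor indexed by the list `l` (of length `m+1`) in `(Δ')^m x`. -/
noncomputable def deltaPow : ℕ → El α → List (El α) → ℂ
  | 0, x, l => if l = [x] then 1 else 0
  | m + 1, x, l =>
    match l with
    | y0 :: y1 :: rest => ∑ u : El α, delta' u (y0, y1) * deltaPow m x (u :: rest)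
    | _ => 0

/-- The base constant for the weight function. -/
def Cc (α : Type*) [Fintype α] : ℕ := Fintype.card α + 3

/-- Weight of a single block. -/
def fwt (b : Finset α × Finset (Finset α)) : ℕ := Cc α ^ (b.1.card + b.2.card)

/-- Weight of an element. -/
def mu (x : El α) : ℕ := ∑ b ∈ x, fwt b

lemma card_le_of_isEl (y : El α) (hy : isEl y) : y.card ≤ Fintype.card α + 2 := by
  classical
  set supp : (Finset α × Finset (Finset α)) → Finset α := fun p => p.1 ∪ R p.2 with hsupp
  have hsplit := Finset.card_filter_add_card_filter_not
    (s := y) (p := fun p => (supp p).Nonempty)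
  set y1 := y.filter (fun p => (supp p).Nonempty) with hy1def
  set y2 := y.filter (fun p => ¬ (supp p).Nonempty) with hy2def
  have h1 : y1.card ≤ Fintype.card α := by
    have hdisj : ∀ p ∈ y1, ∀ q ∈ y1, p ≠ q → Disjoint (supp p) (supp q) := by
      intro p hp q hq hne
      exact hy.1 p (Finset.mem_of_mem_filter _ hp) q (Finset.mem_of_mem_filter _ hq) hne
    have hcard : ∑ p ∈ y1, (supp p).card = (y1.biUnion supp).card :=
      (Finset.card_biUnion hdisj).symm
    have hle : (y1.biUnion supp).card ≤ Fintype.card α := by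
      simpa using Finset.card_le_card (Finset.subset_univ (y1.biUnion supp))
    have hone : ∀ p ∈ y1, 1 ≤ (supp p).card := by
      intro p hp
      exact Finset.card_pos.mpr (Finset.mem_filter.mp hp).2
    calc y1.card = ∑ _p ∈ y1, 1 := by simp
      _ ≤ ∑ p ∈ y1, (supp p).card := Finset.sum_le_sum hone
      _ = (y1.biUnion supp).card := hcard
      _ ≤ Fintype.card α := hle
  have h2 : y2.card ≤ 2 := by
    have hsub : y2 ⊆ {((∅ : Finset α), (∅ : Finset (Finset α))), (∅, {∅})} := by
      intro p hp
      have hp' := Finset.mem_filter.mp hp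
      have hempty : supp p = ∅ := Finset.not_nonempty_iff_eq_empty.mp hp'.2
      have h1' : p.1 = ∅ := by
        have := Finset.union_eq_empty.mp hempty
        exact this.1
      have h2' : R p.2 = ∅ := (Finset.union_eq_empty.mp hempty).2
      have hsets : ∀ s ∈ p.2, s = ∅ := by
        intro s hs
        have := (Finset.sup_eq_bot_iff id p.2).mp h2' s hs
        simpa using this
      have hp2 : p.2 ⊆ {∅} := by
        intro s hs
        simp [hsets s hs]
      rcases Finset.subset_singleton_iff.mp hp2 with h | h
      · simp [Prod.ext_iff, h1', h]
      · simp [Prod.ext_iff, h1', h]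
    calc y2.card ≤ ({((∅ : Finset α), (∅ : Finset (Finset α))), (∅, {∅})} : El α).card :=
          Finset.card_le_card hsub
      _ ≤ 2 := by
          refine le_trans (Finset.card_insert_le _ _) ?_
          simp
  omega

lemma mu_lt_of_admissible (x y : El α) (h : admissible x y) : mu y + 1 ≤ mu x := by
  classical
  obtain ⟨hyEl, hyne, h3, _⟩ := h
  set g : (Finset α × Finset (Finset α)) → (Finset α × Finset (Finset α)) :=
    fun p => if hp : ∃ b, b ∈ x ∧ p.1 ⊆ b.1 ∧ p.2 ⊆ b.2 ∧ p.1 ≠ b.1 ∧ p.2 ≠ b.2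
      then hp.choose else p with hgdef
  have hg : ∀ p ∈ y, g p ∈ x ∧ p.1 ⊂ (g p).1 ∧ p.2 ⊂ (g p).2 := by
    intro p hp
    obtain ⟨b, hb, hsub⟩ := h3 p hp
    have hex : ∃ b, b ∈ x ∧ p.1 ⊆ b.1 ∧ p.2 ⊆ b.2 ∧ p.1 ≠ b.1 ∧ p.2 ≠ b.2 :=
      ⟨b, hb, hsub⟩
    have hspec := hex.choose_spec
    rw [hgdef]
    simp only [dif_pos hex]
    exact ⟨hspec.1, HasSubset.Subset.ssubset_of_ne hspec.2.1 hspec.2.2.2.1,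
      HasSubset.Subset.ssubset_of_ne hspec.2.2.1 hspec.2.2.2.2⟩
  have hmaps : ∀ p ∈ y, g p ∈ x := fun p hp => (hg p hp).1
  have hfiber : ∀ b ∈ x, (∑ p ∈ y.filter (fun p => g p = b), fwt p) + 1 ≤ fwt b := by
    intro b hb
    by_cases hne : (y.filter (fun p => g p = b)).Nonempty
    · obtain ⟨p0, hp0⟩ := hne
      have hp0y := Finset.mem_of_mem_filter _ hp0
      have hp0b : g p0 = b := (Finset.mem_filter.mp hp0).2
      have hb1 : 1 ≤ b.1.card := by
        have := Finset.card_lt_card ((hg p0 hp0y).2.1)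
        rw [hp0b] at this
        omega
      have hb2 : 1 ≤ b.2.card := by
        have := Finset.card_lt_card ((hg p0 hp0y).2.2)
        rw [hp0b] at this
        omega
      set nb := b.1.card + b.2.card with hnb
      have hnb2 : 2 ≤ nb := by omega
      have hCc : 3 ≤ Cc α := by simp [Cc]
      have hbound : ∀ p ∈ y.filter (fun p => g p = b), fwt p ≤ Cc α ^ (nb - 2) := by
        intro p hp
        have hpy := Finset.mem_of_mem_filter _ hp
        have hpb : g p = b := (Finset.mem_filter.mp hp).2
        have hc1 : p.1.card < b.1.card := by
          have := Finset.card_lt_card ((hg p hpy).2.1); rwa [hpb] at this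
        have hc2 : p.2.card < b.2.card := by
          have := Finset.card_lt_card ((hg p hpy).2.2); rwa [hpb] at this
        have hle : p.1.card + p.2.card ≤ nb - 2 := by omega
        exact Nat.pow_le_pow_right (by omega) hle
      have hsum : (∑ p ∈ y.filter (fun p => g p = b), fwt p)
          ≤ (y.filter (fun p => g p = b)).card * Cc α ^ (nb - 2) := by
        have := Finset.sum_le_card_nsmul (y.filter (fun p => g p = b)) fwt
          (Cc α ^ (nb - 2)) hbound
        simpa [smul_eq_mul] using this
      have hcard : (y.filter (fun p => g p = b)).card ≤ Cc α - 1 := by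
        have h1 : (y.filter (fun p => g p = b)).card ≤ y.card :=
          Finset.card_le_card (Finset.filter_subset _ _)
        have h2 := card_le_of_isEl y hyEl
        simp only [Cc]
        omega
      set K := Cc α ^ (nb - 2) with hK
      have hK1 : 1 ≤ K := Nat.one_le_pow _ _ (by omega)
      have hstep : (Cc α - 1) * K + 1 ≤ Cc α * K := by
        have : (Cc α - 1) * K + K = Cc α * K := by
          have : (Cc α - 1) + 1 = Cc α := by omega
          calc (Cc α - 1) * K + K = ((Cc α - 1) + 1) * K := by ring
            _ = Cc α * K := by rw [this]
        omega
      have hpow : Cc α * K ≤ fwt b := by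
        rw [hK]
        have : Cc α * Cc α ^ (nb - 2) = Cc α ^ (nb - 2 + 1) := by
          rw [pow_succ]; ring
        rw [this]
        exact Nat.pow_le_pow_right (by omega) (by omega)
      have : (∑ p ∈ y.filter (fun p => g p = b), fwt p) + 1 ≤ (Cc α - 1) * K + 1 := by
        have := Nat.mul_le_mul_right K hcard
        omega
      omega
    · have : (∑ p ∈ y.filter (fun p => g p = b), fwt p) = 0 := by
        rw [Finset.not_nonempty_iff_eq_empty.mp hne]; simp
      rw [this]
      exact Nat.one_le_pow _ _ (by simp [Cc])
  have hfw : ∑ b ∈ x, ∑ p ∈ y.filter (fun p => g p = b), fwt p = mu y := by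
    simpa [mu] using Finset.sum_fiberwise_of_maps_to hmaps fwt
  have hxne : 1 ≤ x.card := by
    obtain ⟨p, hp⟩ := hyne
    exact Finset.card_pos.mpr ⟨g p, hmaps p hp⟩
  have htot : mu y + x.card ≤ mu x := by
    rw [← hfw]
    have := Finset.sum_le_sum hfiber
    simpa [Finset.sum_add_distrib, mu] using this
  omega

lemma deltaPow_ne_zero_chain (m : ℕ) (x : El α) (l : List (El α))
    (h : deltaPow m x l ≠ 0) : ∃ y rest, l = y :: rest ∧ mu y + m ≤ mu x := by
  classical
  induction m generalizing l with
  | zero =>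
    have hl : l = [x] := by
      by_contra hc
      simp [deltaPow, hc] at h
    exact ⟨x, [], hl, by omega⟩
  | succ m ih =>
    match l with
    | [] => simp [deltaPow] at h
    | [y0] => simp [deltaPow] at h
    | y0 :: y1 :: rest =>
      rw [deltaPow] at h
      obtain ⟨u, _, hu⟩ := Finset.exists_ne_zero_of_sum_ne_zero h
      have hd' : delta' u (y0, y1) ≠ 0 := left_ne_zero_of_mul hu
      have hadm : admissible u y0 := by
        rw [delta'] at hd'
        exact (ite_ne_right_iff.mp hd').1.1
      have hrec : deltaPow m x (u :: rest) ≠ 0 := right_ne_zero_of_mul hu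
      obtain ⟨z, rest', heq, hmu⟩ := ih (u :: rest) hrec
      have hz : z = u := by injection heq with h1 h2; exact h1.symm
      have := mu_lt_of_admissible u y0 hadm
      exact ⟨y0, y1 :: rest, rfl, by subst hz; omega⟩

/-- the reduced coproduct is conilpotent: for every element
`U ∪ {Iᵢ}` of `Ξ_A` there is a positive integer `m` with `(Δ')^m (U ∪ {Iᵢ}) = 0`,
i.e. all coefficients of `(Δ')^m` applied to it vanish. -/
theorem reduced_coproduct_conilpotent (U : Finset α) (S : Finset (Finset α))
    (hUS : Disjoint U (R S))
    (hS : ∀ s ∈ S, ∀ t ∈ S, s ≠ t → Disjoint s t) :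
    ∃ m : ℕ, 0 < m ∧ ∀ l : List (El α), deltaPow m ({(U, S)} : El α) l = 0 := by
  refine ⟨mu ({(U, S)} : El α) + 1, by omega, ?_⟩
  intro l
  by_contra h
  obtain ⟨y, rest, _, hmu⟩ := deltaPow_ne_zero_chain _ _ l h
  omega

end SetHopf
end

section
/- Let F be a primary forest on a finite set A and let (V,(V_μ)), (W,(W_ν)) ∈ A_F be two factorisations, and (I,(Iᵢ)) ∈ A_F with (I,(Iᵢ)) ⊆ (V,(V_μ)) and (I,(Iᵢ)) ⊆ (W,(W_ν)). Then quotienting commutes with the semilattice join: ((V,(V_μ)) ∨ (W,(W_ν)))/(I,(Iᵢ)) = ((V,(V_μ))/(I,(Iᵢ))) ∨ ((W,(W_ν))/(I,(Iᵢ))). -/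
/-- A forest in `A`: a family of finite subsets containing `∅` such that any two members
are disjoint or nested. -/
def IsForest {A : Type*} (F : Set (Set A)) : Prop :=
  ∅ ∈ F ∧ (∀ U ∈ F, U.Finite) ∧ ∀ I ∈ F, ∀ J ∈ F, I ∩ J = ∅ ∨ I ⊆ J ∨ J ⊆ I

/-- A forest is primary if no member is the disjoint union of two or more other members. -/
def IsPrimary {A : Type*} (F : Set (Set A)) : Prop :=
  ∀ U ∈ F, ∀ G : Set (Set A), G ⊆ F → U ∉ G → G.Pairwise Disjoint →
    2 ≤ G.ncard → ⋃₀ G ≠ U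

/-- Membership in `A_F`: a factorisation identified with its family of blocks. -/
def memAF {A : Type*} (F G : Set (Set A)) : Prop :=
  G ⊆ F ∧ G.Finite ∧ (∀ S ∈ G, S.Nonempty) ∧ G.Pairwise Disjoint

/-- Join of factorisations: the maximal blocks of the union of the block families. -/
def fjoin {A : Type*} (G H : Set (Set A)) : Set (Set A) :=
  {S | S ∈ G ∪ H ∧ ∀ T ∈ G ∪ H, S ⊆ T → S = T}

/-- Order on factorisations: every block of `G` lies in a block of `H`. -/
def fle {A : Type*} (G H : Set (Set A)) : Prop := ∀ S ∈ G, ∃ T ∈ H, S ⊆ T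

/-- Quotient of the factorisation `G` by the factorisation `I ⊆ G`: each block `V` of `G`
becomes the pair `(V \ ⋃₀I, {S ∈ I | S ⊆ V})`. -/
def qfact {A : Type*} (G I : Set (Set A)) : Set (Set A × Set (Set A)) :=
  (fun V => (V \ ⋃₀ I, {S | S ∈ I ∧ S ⊆ V})) '' G

/-- Underlying block of a quotient pair, via the reversion map. -/
def underly {A : Type*} (p : Set A × Set (Set A)) : Set A := p.1 ∪ ⋃₀ p.2

/-- The collapsed classes contributing to the join block with underlying set
`underly p`: the maximal collapsed classes of all pairs whose underlying block lies
inside it. -/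
def collapsedIn {A : Type*} (P Q : Set (Set A × Set (Set A)))
    (p : Set A × Set (Set A)) : Set (Set A) :=
  {S | (∃ r ∈ P ∪ Q, underly r ⊆ underly p ∧ S ∈ r.2) ∧
    ∀ S', (∃ r ∈ P ∪ Q, underly r ⊆ underly p ∧ S' ∈ r.2) → S ⊆ S' → S = S'}

/-- Join of two quotient factorisations: keep the pairs with maximal underlying block,
merging the collapsed classes of all pairs lying inside it. -/
def qjoin {A : Type*} (P Q : Set (Set A × Set (Set A))) : Set (Set A × Set (Set A)) :=
  {q | ∃ p ∈ P ∪ Q, (∀ r ∈ P ∪ Q, underly p ⊆ underly r → underly p = underly r) ∧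
    q = (underly p \ ⋃₀ collapsedIn P Q p, collapsedIn P Q p)}

/-- Proposition 4.2: for a primary forest `F` on a finite set `A` and
factorisations `(V,(V_μ)), (W,(W_ν)) ∈ A_F` both containing `(I,(Iᵢ)) ∈ A_F`, quotienting
commutes with the semilattice join:
`((V,(V_μ)) ∨ (W,(W_ν)))/(I,(Iᵢ)) = ((V,(V_μ))/(I,(Iᵢ))) ∨ ((W,(W_ν))/(I,(Iᵢ)))`. -/
theorem quotient_commutes_with_join {A : Type*} [Fintype A] {F : Set (Set A)}
    (hF : IsForest F) (hP : IsPrimary F) (G H I : Set (Set A))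
    (hG : memAF F G) (hH : memAF F H) (hI : memAF F I)
    (hIG : fle I G) (hIH : fle I H) :
    qfact (fjoin G H) I = qjoin (qfact G I) (qfact H I) := by
  obtain ⟨hGF, hGfin, hGne, hGdis⟩ := hG
  obtain ⟨hHF, hHfin, hHne, hHdis⟩ := hH
  obtain ⟨hIF, hIfin, hIne, hIdis⟩ := hI
  obtain ⟨-, -, hforest⟩ := hF
  set f : Set A → Set A × Set (Set A) :=
    fun V => (V \ ⋃₀ I, {S | S ∈ I ∧ S ⊆ V}) with hf
  have hVF : ∀ V ∈ G ∪ H, V ∈ F := by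
    rintro V (h | h); exacts [hGF h, hHF h]
  have key : ∀ V ∈ G ∪ H, ∀ S ∈ I, S ⊆ V ∨ S ∩ V = ∅ := by
    rintro V hV S hS
    rcases hforest S (hIF hS) V (hVF V hV) with h | h | h
    · exact Or.inr h
    · exact Or.inl h
    · left
      rcases hV with hVG | hVH
      · obtain ⟨T, hT, hST⟩ := hIG S hS
        have hVT : V = T := by
          by_contra hne
          obtain ⟨x, hx⟩ := hGne V hVG
          exact (hGdis hVG hT hne).ne_of_mem hx (hST (h hx)) rfl
        exact hVT ▸ hST
      · obtain ⟨T, hT, hST⟩ := hIH S hS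
        have hVT : V = T := by
          by_contra hne
          obtain ⟨x, hx⟩ := hHne V hVH
          exact (hHdis hVH hT hne).ne_of_mem hx (hST (h hx)) rfl
        exact hVT ▸ hST
  have Ieq : ∀ S ∈ I, ∀ S' ∈ I, S ⊆ S' → S = S' := by
    intro S hS S' hS' hsub
    by_contra hne
    obtain ⟨x, hx⟩ := hIne S hS
    exact (hIdis hS hS' hne).ne_of_mem hx (hsub hx) rfl
  have eG : qfact G I = f '' G := rfl
  have eH : qfact H I = f '' H := rfl
  have eJ : qfact (fjoin G H) I = f '' (fjoin G H) := rfl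
  have hPQ : f '' G ∪ f '' H = f '' (G ∪ H) := (Set.image_union f G H).symm
  have hund : ∀ V ∈ G ∪ H, underly (f V) = V := by
    intro V hV
    ext x
    simp only [underly, hf, Set.mem_union, Set.mem_diff, Set.mem_sUnion, Set.mem_setOf_eq]
    constructor
    · rintro (⟨hxV, -⟩ | ⟨S, ⟨hSI, hSV⟩, hxS⟩)
      · exact hxV
      · exact hSV hxS
    · intro hxV
      by_cases hx : x ∈ ⋃₀ I
      · obtain ⟨S, hS, hxS⟩ := hx
        rcases key V hV S hS with hsub | hdis
        · exact Or.inr ⟨S, ⟨hS, hsub⟩, hxS⟩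
        · exact absurd hdis (Set.nonempty_iff_ne_empty.mp ⟨x, hxS, hxV⟩)
      · exact Or.inl ⟨hxV, hx⟩
  have keysub : ∀ V ∈ G ∪ H, V \ ⋃₀ {S | S ∈ I ∧ S ⊆ V} = V \ ⋃₀ I := by
    intro V hV
    ext x
    simp only [Set.mem_diff, Set.mem_sUnion, Set.mem_setOf_eq, not_exists]
    constructor
    · rintro ⟨hxV, h⟩
      refine ⟨hxV, fun S hxS => ?_⟩
      rcases key V hV S hxS.1 with hsub | hdis
      · exact h S ⟨⟨hxS.1, hsub⟩, hxS.2⟩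
      · exact absurd hdis (Set.nonempty_iff_ne_empty.mp ⟨x, hxS.2, hxV⟩)
    · rintro ⟨hxV, h⟩
      exact ⟨hxV, fun S hxS => h S ⟨hxS.1.1, hxS.2⟩⟩
  have hcoll : ∀ V ∈ G ∪ H,
      collapsedIn (f '' G) (f '' H) (f V) = {S | S ∈ I ∧ S ⊆ V} := by
    intro V hV
    ext S
    simp only [collapsedIn, Set.mem_setOf_eq]
    constructor
    · rintro ⟨⟨r, hr, hru, hSr⟩, -⟩
      rw [hPQ] at hr
      obtain ⟨V', hV', rfl⟩ := hr
      rw [hund V hV, hund V' hV'] at hru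
      obtain ⟨hSI, hSV'⟩ := hSr
      exact ⟨hSI, hSV'.trans hru⟩
    · rintro ⟨hSI, hSV⟩
      refine ⟨⟨f V, by rw [hPQ]; exact Set.mem_image_of_mem f hV,
        subset_refl _, ⟨hSI, hSV⟩⟩, ?_⟩
      rintro S' ⟨r, hr, hru, hS'r⟩ hSS'
      rw [hPQ] at hr
      obtain ⟨V', hV', rfl⟩ := hr
      exact Ieq S hSI S' hS'r.1 hSS'
  rw [eG, eH, eJ]
  ext q
  simp only [fjoin, Set.mem_image, Set.mem_setOf_eq, qjoin]
  constructor
  · rintro ⟨V, ⟨hV, hmax⟩, rfl⟩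
    refine ⟨f V, by rw [hPQ]; exact Set.mem_image_of_mem f hV, ?_, ?_⟩
    · intro r hr hle
      rw [hPQ] at hr
      obtain ⟨V', hV', rfl⟩ := hr
      rw [hund V hV, hund V' hV'] at hle ⊢
      exact hmax V' hV' hle
    · rw [hcoll V hV, hund V hV, keysub V hV]
  · rintro ⟨p, hp, hmax, rfl⟩
    rw [hPQ] at hp
    obtain ⟨V, hV, rfl⟩ := hp
    refine ⟨V, ⟨hV, ?_⟩, ?_⟩
    · intro T hT hVT
      have h2 := hmax (f T) (by rw [hPQ]; exact Set.mem_image_of_mem f hT)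
        (by rw [hund V hV, hund T hT]; exact hVT)
      rwa [hund V hV, hund T hT] at h2
    · rw [hcoll V hV, hund V hV, keysub V hV]
end

section
/- Let F be a primary forest on A and let (I,(Iᵢ)), (J,(J_j)), (U,(U_λ)), (V,(V_μ)) ∈ A_F with (I,(Iᵢ)) ⊆ (U,(U_λ)) and (J,(J_j)) ⊆ (V,(V_μ)). Then ((U,(U_λ))/(I,(Iᵢ))) ∨ ((V,(V_μ))/(J,(J_j))) = ((U,(U_λ)) ∨ (V,(V_μ))) / ((I,(Iᵢ)) ∨ (J,(J_j))). -/
lemma underly_block {A : Type*} {G I : Set (Set A)} (hGd : G.Pairwise Disjoint)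
    (hIG : fle I G) {V : Set A} (hV : V ∈ G) :
    underly (V \ ⋃₀ I, {S | S ∈ I ∧ S ⊆ V}) = V := by
  unfold underly
  ext x
  simp only [Set.mem_union, Set.mem_diff, Set.mem_sUnion, Set.mem_setOf_eq]
  constructor
  · rintro (⟨hx, -⟩ | ⟨S, ⟨-, hSV⟩, hx⟩)
    · exact hx
    · exact hSV hx
  · intro hxV
    by_cases hx : x ∈ ⋃₀ I
    · obtain ⟨S, hSI, hxS⟩ := hx
      obtain ⟨T, hTG, hST⟩ := hIG S hSI
      have hTV : T = V := by
        by_contra hne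
        exact Set.disjoint_left.mp (hGd hTG hV hne) (hST hxS) hxV
      exact Or.inr ⟨S, ⟨hSI, hTV ▸ hST⟩, hxS⟩
    · exact Or.inl ⟨hxV, by simpa using hx⟩

/-- Corollary 4.2: for factorisations `(I,(Iᵢ)) ⊆ (U,(U_λ))` and
`(J,(J_j)) ⊆ (V,(V_μ))` in `A_F`, the join of quotients is the quotient of joins:
`((U,(U_λ))/(I,(Iᵢ))) ∨ ((V,(V_μ))/(J,(J_j))) = ((U,(U_λ)) ∨ (V,(V_μ))) / ((I,(Iᵢ)) ∨ (J,(J_j)))`. -/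
theorem join_of_quotients_eq_quotient_of_joins {A : Type*} {F : Set (Set A)}
    (hF : IsForest F) (hP : IsPrimary F) (G H I J : Set (Set A))
    (hG : memAF F G) (hH : memAF F H) (hI : memAF F I) (hJ : memAF F J)
    (hIG : fle I G) (hJH : fle J H) :
    qjoin (qfact G I) (qfact H J) = qfact (fjoin G H) (fjoin I J) := by
  obtain ⟨hGF, hGfin, hGne, hGd⟩ := hG
  obtain ⟨hHF, hHfin, hHne, hHd⟩ := hH
  obtain ⟨hIF, hIfin, hIne, hId⟩ := hI
  obtain ⟨hJF, hJfin, hJne, hJd⟩ := hJ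
  set P := qfact G I with hPdef
  set Q := qfact H J with hQdef
  have hGHF : ∀ V ∈ G ∪ H, V ∈ F := fun V hV => hV.elim (fun h => hGF h) (fun h => hHF h)
  have hIJF : ∀ S ∈ I ∪ J, S ∈ F := fun S hS => hS.elim (fun h => hIF h) (fun h => hJF h)
  have hIJne : ∀ S ∈ I ∪ J, S.Nonempty := fun S hS => hS.elim (hIne S) (hJne S)
  have hIJle : ∀ S ∈ I ∪ J, ∃ V ∈ G ∪ H, S ⊆ V := by
    rintro S (hS | hS)
    · obtain ⟨V, hV, h⟩ := hIG S hS; exact ⟨V, Or.inl hV, h⟩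
    · obtain ⟨V, hV, h⟩ := hJH S hS; exact ⟨V, Or.inr hV, h⟩
  -- forest nesting
  have nest : ∀ X ∈ F, ∀ Y ∈ F, (X ∩ Y).Nonempty → X ⊆ Y ∨ Y ⊆ X := by
    intro X hX Y hY hne
    rcases hF.2.2 X hX Y hY with h | h | h
    · exact absurd h hne.ne_empty
    · exact Or.inl h
    · exact Or.inr h
  have memP : ∀ {V : Set A}, V ∈ G → (V \ ⋃₀ I, {S | S ∈ I ∧ S ⊆ V}) ∈ P ∪ Q :=
    fun hV => Or.inl ⟨_, hV, rfl⟩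
  have memQ : ∀ {V : Set A}, V ∈ H → (V \ ⋃₀ J, {S | S ∈ J ∧ S ⊆ V}) ∈ Q :=
    fun hV => ⟨_, hV, rfl⟩
  -- structure of members of P ∪ Q
  have hund : ∀ r ∈ P ∪ Q, ∃ V, V ∈ G ∪ H ∧ underly r = V ∧
      (∀ S ∈ r.2, S ∈ I ∪ J ∧ S ⊆ V) := by
    rintro r (⟨V, hV, rfl⟩ | ⟨V, hV, rfl⟩)
    · exact ⟨V, Or.inl hV, underly_block hGd hIG hV, fun S hS => ⟨Or.inl hS.1, hS.2⟩⟩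
    · exact ⟨V, Or.inr hV, underly_block hHd hJH hV, fun S hS => ⟨Or.inr hS.1, hS.2⟩⟩
  -- each block of G ∪ H is the underlying set of a member of P ∪ Q
  have hsurj : ∀ V ∈ G ∪ H, ∃ r ∈ P ∪ Q, underly r = V := by
    rintro V (hV | hV)
    · exact ⟨_, memP hV, underly_block hGd hIG hV⟩
    · exact ⟨_, Or.inr (memQ hV), underly_block hHd hJH hV⟩
  -- each block of I ∪ J sits in some r ∈ P ∪ Q
  have hwit : ∀ S ∈ I ∪ J, ∃ r ∈ P ∪ Q, ∃ V ∈ G ∪ H, underly r = V ∧ S ⊆ V ∧ S ∈ r.2 := by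
    rintro S (hS | hS)
    · obtain ⟨V, hV, hSV⟩ := hIG S hS
      exact ⟨_, memP hV, V, Or.inl hV, underly_block hGd hIG hV, hSV, hS, hSV⟩
    · obtain ⟨V, hV, hSV⟩ := hJH S hS
      exact ⟨_, Or.inr (memQ hV), V, Or.inr hV, underly_block hHd hJH hV, hSV, hS, hSV⟩
  -- now fix a maximal block W
  have key : ∀ W, W ∈ G ∪ H → (∀ T ∈ G ∪ H, W ⊆ T → W = T) →
      (∀ V ∈ G ∪ H, (V ∩ W).Nonempty → V ⊆ W) ∧
      (∀ T ∈ I ∪ J, (T ∩ W).Nonempty → T ⊆ W) := by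
    intro W hW hWmax
    have h1 : ∀ V ∈ G ∪ H, (V ∩ W).Nonempty → V ⊆ W := by
      intro V hV hne
      rcases nest V (hGHF V hV) W (hGHF W hW) hne with h | h
      · exact h
      · exact (hWmax V hV h).symm.subset
    refine ⟨h1, ?_⟩
    intro T hT hne
    obtain ⟨V, hV, hTV⟩ := hIJle T hT
    exact (h1 V hV (hne.mono (Set.inter_subset_inter_left _ hTV))).trans' hTV
  -- the collapsed classes of a maximal block
  have hC : ∀ (p : Set A × Set (Set A)) (W : Set A), W ∈ G ∪ H →
      (∀ T ∈ G ∪ H, W ⊆ T → W = T) → underly p = W →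
      collapsedIn P Q p = {S | S ∈ fjoin I J ∧ S ⊆ W} := by
    intro p W hW hWmax hpW
    obtain ⟨h1, h2⟩ := key W hW hWmax
    have hsetA : {S : Set A | ∃ r ∈ P ∪ Q, underly r ⊆ underly p ∧ S ∈ r.2} =
        {S | S ∈ I ∪ J ∧ S ⊆ W} := by
      ext S
      simp only [Set.mem_setOf_eq]
      constructor
      · rintro ⟨r, hr, hrW, hSr⟩
        obtain ⟨V, hV, hrV, hmem⟩ := hund r hr
        obtain ⟨hSIJ, hSV⟩ := hmem S hSr
        exact ⟨hSIJ, hSV.trans (hrV ▸ hpW ▸ hrW)⟩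
      · rintro ⟨hSIJ, hSW⟩
        obtain ⟨r, hr, V, hV, hrV, hSV, hSr⟩ := hwit S hSIJ
        have hVW : V ⊆ W :=
          h1 V hV ((hIJne S hSIJ).mono (Set.subset_inter hSV hSW))
        exact ⟨r, hr, by rw [hrV, hpW]; exact hVW, hSr⟩
    unfold collapsedIn
    ext S
    simp only [Set.mem_setOf_eq]
    have hmemiff : ∀ T, (∃ r ∈ P ∪ Q, underly r ⊆ underly p ∧ T ∈ r.2) ↔
        (T ∈ I ∪ J ∧ T ⊆ W) := fun T => Set.ext_iff.mp hsetA T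
    constructor
    · rintro ⟨hSmem, hSmax⟩
      obtain ⟨hSIJ, hSW⟩ := (hmemiff S).mp hSmem
      refine ⟨⟨hSIJ, ?_⟩, hSW⟩
      intro T hT hST
      refine hSmax T ((hmemiff T).mpr ⟨hT, h2 T hT ((hIJne S hSIJ).mono
        (Set.subset_inter hST hSW))⟩) hST
    · rintro ⟨⟨hSIJ, hSmax⟩, hSW⟩
      refine ⟨(hmemiff S).mpr ⟨hSIJ, hSW⟩, ?_⟩
      intro S' hS' hSS'
      exact hSmax S' ((hmemiff S').mp hS').1 hSS'
  -- the underlying difference of a maximal block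
  have hD : ∀ W, W ∈ G ∪ H → (∀ T ∈ G ∪ H, W ⊆ T → W = T) →
      W \ ⋃₀ {S | S ∈ fjoin I J ∧ S ⊆ W} = W \ ⋃₀ fjoin I J := by
    intro W hW hWmax
    obtain ⟨h1, h2⟩ := key W hW hWmax
    ext x
    simp only [Set.mem_diff, Set.mem_sUnion, Set.mem_setOf_eq]
    constructor
    · rintro ⟨hxW, hx⟩
      refine ⟨hxW, ?_⟩
      rintro ⟨S, hS, hxS⟩
      exact hx ⟨S, ⟨hS, h2 S hS.1 ⟨x, hxS, hxW⟩⟩, hxS⟩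
    · rintro ⟨hxW, hx⟩
      exact ⟨hxW, fun ⟨S, hS, hxS⟩ => hx ⟨S, hS.1, hxS⟩⟩
  -- main equality
  ext q
  constructor
  · rintro ⟨p, hp, hmax, rfl⟩
    obtain ⟨W, hW, hpW, -⟩ := hund p hp
    have hWmax : ∀ T ∈ G ∪ H, W ⊆ T → W = T := by
      intro T hT hWT
      obtain ⟨r, hr, hrT⟩ := hsurj T hT
      have := hmax r hr (by rw [hpW, hrT]; exact hWT)
      rw [hpW, hrT] at this; exact this
    refine ⟨W, ⟨hW, hWmax⟩, ?_⟩
    rw [hC p W hW hWmax hpW, hpW, hD W hW hWmax]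
  · rintro ⟨W, ⟨hW, hWmax⟩, rfl⟩
    obtain ⟨p, hp, hpW⟩ := hsurj W hW
    refine ⟨p, hp, ?_, ?_⟩
    · intro r hr hle
      obtain ⟨T, hT, hrT, -⟩ := hund r hr
      rw [hpW, hrT] at hle ⊢
      exact hWmax T hT hle
    · rw [hC p W hW hWmax hpW, hpW, hD W hW hWmax]
end

section
/- For the coproduct Δ_F on the ℂ-span of the quotient factorisations A_quo of a primary forest F on a finite set A, defined by Δ_F(x) = x⊗∅ + ∅⊗x + Σ over intermediate factorisations, coassociativity holds: (Δ_F ⊗ id)Δ_F = (id ⊗ Δ_F)Δ_F. In particular, for the connected element A itself, Σ over chains (I,(Iᵢ)) ⊆ (J,(J_j)) in A_F of (I,(Iᵢ)) ⊗ ((J,(J_j))/(Iᵢ)) ⊗ (A/(J_j)) computes both (Δ'_F ⊗ id)Δ'_F A and (id ⊗ Δ'_F)Δ'_F A. -/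
open scoped Classical

namespace ForestHopf

variable {A : Type*} [Fintype A] [DecidableEq A]

/-- A forest on the finite set `A` (as a family of `Finset`s): it contains `∅` and the
whole set, and any two members are disjoint or nested. -/
def IsForestF (F : Finset (Finset A)) : Prop :=
  ∅ ∈ F ∧ Finset.univ ∈ F ∧ ∀ I ∈ F, ∀ J ∈ F, I ∩ J = ∅ ∨ I ⊆ J ∨ J ⊆ I

/-- A forest is primary if no member is the disjoint union of two or more other members. -/
def IsPrimaryF (F : Finset (Finset A)) : Prop :=
  ∀ U ∈ F, ∀ G ⊆ F, U ∉ G → (∀ S ∈ G, ∀ T ∈ G, S ≠ T → Disjoint S T) →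
    2 ≤ G.card → G.sup id ≠ U

/-- Membership in `A_F`: a factorisation identified with its (pairwise disjoint, nonempty)
family of blocks, all belonging to `F`. -/
def memAF (F G : Finset (Finset A)) : Prop :=
  G ⊆ F ∧ (∀ S ∈ G, S.Nonempty) ∧ ∀ S ∈ G, ∀ T ∈ G, S ≠ T → Disjoint S T

/-- Order on factorisations: every block of `G` lies in a block of `H`. -/
def fle (G H : Finset (Finset A)) : Prop := ∀ S ∈ G, ∃ T ∈ H, S ⊆ T

/-- Elements of `A_quo`: a quotient `(U,(U_λ))/(I,(Iᵢ))` is encoded as the pair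
`x = (x.1, x.2)` of the factorisation `x.1 = (U,(U_λ))` and the divisor `x.2 = (I,(Iᵢ))`;
bare factorisations correspond to `x.2 = ∅`. -/
abbrev QEl (A : Type*) := Finset (Finset A) × Finset (Finset A)

/-- Structure coefficients of the coproduct `Δ_F`:  `deltaF F x (y, z)` is the coefficient
of `y ⊗ z` in `Δ_F x`.  For `x = (U,(U_λ))/(I,(Iᵢ))`,
`Δ_F x = x⊗∅ + ∅⊗x + Σ_{(I,(Iᵢ)) ⊊ (V,(V_μ)) ⊊ (U,(U_λ))}
  ((V,(V_μ))/(I,(Iᵢ))) ⊗ ((U,(U_λ))/(V,(V_μ)))`. -/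
noncomputable def deltaF (F : Finset (Finset A)) (x : QEl A) (p : QEl A × QEl A) : ℂ :=
  if x = ((∅, ∅) : QEl A) then (if p.1 = x ∧ p.2 = x then 1 else 0)
  else
    (if p.1 = x ∧ p.2 = ((∅, ∅) : QEl A) then 1 else 0) +
    (if p.1 = ((∅, ∅) : QEl A) ∧ p.2 = x then 1 else 0) +
    (if (memAF F p.1.1 ∧ p.1.2 = x.2 ∧ p.2.1 = x.1 ∧ p.2.2 = p.1.1 ∧
          fle x.2 p.1.1 ∧ fle p.1.1 x.1 ∧ p.1.1 ≠ x.2 ∧ p.1.1 ≠ x.1) then 1 else 0)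

/-! ### Auxiliary lemmas -/

theorem fle_trans' {G H K : Finset (Finset A)} (h1 : fle G H) (h2 : fle H K) : fle G K := by
  intro S hS
  obtain ⟨T, hT, hST⟩ := h1 S hS
  obtain ⟨T', hT', h'⟩ := h2 T hT
  exact ⟨T', hT', hST.trans h'⟩

theorem fle_subset' {F G H : Finset (Finset A)} (hG : memAF F G) (hH : memAF F H)
    (h1 : fle G H) (h2 : fle H G) : G ⊆ H := by
  intro S hS
  obtain ⟨T, hT, hST⟩ := h1 S hS
  obtain ⟨S', hS', hTS'⟩ := h2 T hT
  have hSne : S.Nonempty := hG.2.1 S hS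
  have hSS' : S ⊆ S' := hST.trans hTS'
  have hSeq : S = S' := by
    by_contra hne
    have hd := hG.2.2 S hS S' hS' hne
    obtain ⟨a, ha⟩ := hSne
    exact (Finset.disjoint_left.mp hd ha) (hSS' ha)
  subst hSeq
  have hTS : T = S := Finset.Subset.antisymm hTS' hST
  exact hTS ▸ hT

theorem fle_antisymm' {F G H : Finset (Finset A)} (hG : memAF F G) (hH : memAF F H)
    (h1 : fle G H) (h2 : fle H G) : G = H :=
  Finset.Subset.antisymm (fle_subset' hG hH h1 h2) (fle_subset' hH hG h2 h1)

theorem fle_bot {G : Finset (Finset A)} (h : fle G ∅) : G = ∅ := by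
  refine Finset.eq_empty_iff_forall_notMem.mpr (fun S hS => ?_)
  obtain ⟨T, hT, -⟩ := h S hS
  exact absurd hT (Finset.notMem_empty T)

theorem deltaF_bot (F : Finset (Finset A)) (p q : QEl A) :
    deltaF F ((∅, ∅) : QEl A) (p, q) =
      if p = ((∅, ∅) : QEl A) ∧ q = ((∅, ∅) : QEl A) then 1 else 0 := by
  rw [deltaF, if_pos rfl]

theorem deltaF_ne (F : Finset (Finset A)) (x : QEl A) (hxe : x ≠ ((∅, ∅) : QEl A))
    (p q : QEl A) :
    deltaF F x (p, q) =
      (if p = x ∧ q = ((∅, ∅) : QEl A) then (1 : ℂ) else 0) +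
      (if p = ((∅, ∅) : QEl A) ∧ q = x then 1 else 0) +
      (if (memAF F p.1 ∧ p.2 = x.2 ∧ q.1 = x.1 ∧ q.2 = p.1 ∧
            fle x.2 p.1 ∧ fle p.1 x.1 ∧ p.1 ≠ x.2 ∧ p.1 ≠ x.1) then 1 else 0) := by
  rw [deltaF, if_neg hxe]

theorem sumE (F : Finset (Finset A)) (w : QEl A) (f : QEl A → ℂ) :
    (∑ u : QEl A, deltaF F ((∅, ∅) : QEl A) (u, w) * f u) =
      (if w = ((∅, ∅) : QEl A) then f ((∅, ∅) : QEl A) else 0) := by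
  have hpt : ∀ u : QEl A, deltaF F ((∅, ∅) : QEl A) (u, w) * f u =
      (if u = ((∅, ∅) : QEl A) then (if w = ((∅, ∅) : QEl A) then f u else 0) else 0) := by
    intro u
    rw [deltaF_bot]
    by_cases h1 : u = ((∅, ∅) : QEl A) <;> by_cases h2 : w = ((∅, ∅) : QEl A) <;>
      simp [h1, h2]
  simp only [hpt]
  simp only [Finset.sum_ite_eq', Finset.mem_univ, if_true]

theorem sumE' (F : Finset (Finset A)) (y : QEl A) (f : QEl A → ℂ) :
    (∑ u : QEl A, deltaF F ((∅, ∅) : QEl A) (y, u) * f u) =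
      (if y = ((∅, ∅) : QEl A) then f ((∅, ∅) : QEl A) else 0) := by
  have hpt : ∀ u : QEl A, deltaF F ((∅, ∅) : QEl A) (y, u) * f u =
      (if u = ((∅, ∅) : QEl A) then (if y = ((∅, ∅) : QEl A) then f u else 0) else 0) := by
    intro u
    rw [deltaF_bot]
    by_cases h1 : u = ((∅, ∅) : QEl A) <;> by_cases h2 : y = ((∅, ∅) : QEl A) <;>
      simp [h1, h2]
  simp only [hpt]
  simp only [Finset.sum_ite_eq', Finset.mem_univ, if_true]

theorem sumL (F : Finset (Finset A)) (x : QEl A) (hxe : x ≠ ((∅, ∅) : QEl A))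
    (w : QEl A) (f : QEl A → ℂ) :
    (∑ u : QEl A, deltaF F x (u, w) * f u) =
      (if w = ((∅, ∅) : QEl A) then f x else 0) +
      (if w = x then f ((∅, ∅) : QEl A) else 0) +
      (if (memAF F w.2 ∧ w.1 = x.1 ∧ fle x.2 w.2 ∧ fle w.2 x.1 ∧ w.2 ≠ x.2 ∧ w.2 ≠ x.1)
        then f (w.2, x.2) else 0) := by
  have hpt : ∀ u : QEl A, deltaF F x (u, w) * f u =
      (if u = x then (if w = ((∅, ∅) : QEl A) then f u else 0) else 0) +
      (if u = ((∅, ∅) : QEl A) then (if w = x then f u else 0) else 0) +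
      (if u = (w.2, x.2) then
        (if (memAF F w.2 ∧ w.1 = x.1 ∧ fle x.2 w.2 ∧ fle w.2 x.1 ∧ w.2 ≠ x.2 ∧ w.2 ≠ x.1)
          then f u else 0) else 0) := by
    intro u
    rw [deltaF_ne F x hxe u w, add_mul, add_mul]
    congr 1
    · congr 1
      · by_cases h1 : u = x <;> by_cases h2 : w = ((∅, ∅) : QEl A) <;> simp [h1, h2]
      · by_cases h1 : u = ((∅, ∅) : QEl A) <;> by_cases h2 : w = x <;> simp [h1, h2]
    · by_cases h : u = (w.2, x.2)
      · subst h
        by_cases hc : (memAF F w.2 ∧ w.1 = x.1 ∧ fle x.2 w.2 ∧ fle w.2 x.1 ∧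
            w.2 ≠ x.2 ∧ w.2 ≠ x.1) <;> simp [hc]
      · rw [if_neg h]
        have hne : ¬(memAF F u.1 ∧ u.2 = x.2 ∧ w.1 = x.1 ∧ w.2 = u.1 ∧
            fle x.2 u.1 ∧ fle u.1 x.1 ∧ u.1 ≠ x.2 ∧ u.1 ≠ x.1) := by
          rintro ⟨-, h2, -, h4, -⟩
          exact h (Prod.ext h4.symm h2)
        rw [if_neg hne, zero_mul]
  simp only [hpt]
  simp only [Finset.sum_add_distrib]
  simp only [Finset.sum_ite_eq', Finset.mem_univ, if_true]

theorem sumR (F : Finset (Finset A)) (x : QEl A) (hxe : x ≠ ((∅, ∅) : QEl A))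
    (y : QEl A) (f : QEl A → ℂ) :
    (∑ u : QEl A, deltaF F x (y, u) * f u) =
      (if y = x then f ((∅, ∅) : QEl A) else 0) +
      (if y = ((∅, ∅) : QEl A) then f x else 0) +
      (if (memAF F y.1 ∧ y.2 = x.2 ∧ fle x.2 y.1 ∧ fle y.1 x.1 ∧ y.1 ≠ x.2 ∧ y.1 ≠ x.1)
        then f (x.1, y.1) else 0) := by
  have hpt : ∀ u : QEl A, deltaF F x (y, u) * f u =
      (if u = ((∅, ∅) : QEl A) then (if y = x then f u else 0) else 0) +
      (if u = x then (if y = ((∅, ∅) : QEl A) then f u else 0) else 0) +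
      (if u = (x.1, y.1) then
        (if (memAF F y.1 ∧ y.2 = x.2 ∧ fle x.2 y.1 ∧ fle y.1 x.1 ∧ y.1 ≠ x.2 ∧ y.1 ≠ x.1)
          then f u else 0) else 0) := by
    intro u
    rw [deltaF_ne F x hxe y u, add_mul, add_mul]
    congr 1
    · congr 1
      · by_cases h1 : u = ((∅, ∅) : QEl A) <;> by_cases h2 : y = x <;> simp [h1, h2]
      · by_cases h1 : u = x <;> by_cases h2 : y = ((∅, ∅) : QEl A) <;> simp [h1, h2]
    · by_cases h : u = (x.1, y.1)
      · subst h
        by_cases hc : (memAF F y.1 ∧ y.2 = x.2 ∧ fle x.2 y.1 ∧ fle y.1 x.1 ∧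
            y.1 ≠ x.2 ∧ y.1 ≠ x.1) <;> simp [hc]
      · rw [if_neg h]
        have hne : ¬(memAF F y.1 ∧ y.2 = x.2 ∧ u.1 = x.1 ∧ u.2 = y.1 ∧
            fle x.2 y.1 ∧ fle y.1 x.1 ∧ y.1 ≠ x.2 ∧ y.1 ≠ x.1) := by
          rintro ⟨-, -, h3, h4, -⟩
          exact h (Prod.ext h3 h4)
        rw [if_neg hne, zero_mul]
  simp only [hpt]
  simp only [Finset.sum_add_distrib]
  simp only [Finset.sum_ite_eq', Finset.mem_univ, if_true]

set_option maxHeartbeats 2000000 in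
/-- Theorem 4.2. -/
theorem deltaF_coassoc (F : Finset (Finset A))
    (hF : IsForestF F) (hPr : IsPrimaryF F) (x : QEl A)
    (hx1 : memAF F x.1) (hx2 : memAF F x.2) (hx12 : fle x.2 x.1)
    (y z w : QEl A) :
    (∑ u : QEl A, deltaF F x (u, w) * deltaF F u (y, z)) =
      (∑ u : QEl A, deltaF F x (y, u) * deltaF F u (z, w)) := by
  by_cases hxe : x = ((∅, ∅) : QEl A)
  · subst hxe
    rw [sumE F w (fun u => deltaF F u (y, z)), sumE' F y (fun u => deltaF F u (z, w))]
    by_cases h1 : w = ((∅, ∅) : QEl A) <;> by_cases h2 : y = ((∅, ∅) : QEl A) <;>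
      simp [h1, h2, deltaF_bot]
  · rw [sumL F x hxe w (fun u => deltaF F u (y, z)),
      sumR F x hxe y (fun u => deltaF F u (z, w))]
    beta_reduce
    have t1 : (if w = ((∅, ∅) : QEl A) then deltaF F x (y, z) else 0) =
        (if w = ((∅, ∅) : QEl A) ∧ (y = x ∧ z = ((∅, ∅) : QEl A)) then (1 : ℂ) else 0) +
        (if w = ((∅, ∅) : QEl A) ∧ (y = ((∅, ∅) : QEl A) ∧ z = x) then 1 else 0) +
        (if w = ((∅, ∅) : QEl A) ∧ (memAF F y.1 ∧ y.2 = x.2 ∧ z.1 = x.1 ∧ z.2 = y.1 ∧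
            fle x.2 y.1 ∧ fle y.1 x.1 ∧ y.1 ≠ x.2 ∧ y.1 ≠ x.1) then 1 else 0) := by
      by_cases h : w = ((∅, ∅) : QEl A)
      · rw [if_pos h, deltaF_ne F x hxe y z]
        simp [h]
      · simp [h]
    have t2 : (if w = x then deltaF F ((∅, ∅) : QEl A) (y, z) else 0) =
        (if w = x ∧ (y = ((∅, ∅) : QEl A) ∧ z = ((∅, ∅) : QEl A)) then (1 : ℂ) else 0) := by
      by_cases h : w = x
      · rw [if_pos h, deltaF_bot]
        simp [h]
      · simp [h]
    have t3 : (if (memAF F w.2 ∧ w.1 = x.1 ∧ fle x.2 w.2 ∧ fle w.2 x.1 ∧ w.2 ≠ x.2 ∧ w.2 ≠ x.1)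
          then deltaF F ((w.2, x.2) : QEl A) (y, z) else 0) =
        (if (memAF F w.2 ∧ w.1 = x.1 ∧ fle x.2 w.2 ∧ fle w.2 x.1 ∧ w.2 ≠ x.2 ∧ w.2 ≠ x.1) ∧
            (y = ((w.2, x.2) : QEl A) ∧ z = ((∅, ∅) : QEl A)) then (1 : ℂ) else 0) +
        (if (memAF F w.2 ∧ w.1 = x.1 ∧ fle x.2 w.2 ∧ fle w.2 x.1 ∧ w.2 ≠ x.2 ∧ w.2 ≠ x.1) ∧
            (y = ((∅, ∅) : QEl A) ∧ z = ((w.2, x.2) : QEl A)) then 1 else 0) +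
        (if (memAF F w.2 ∧ w.1 = x.1 ∧ fle x.2 w.2 ∧ fle w.2 x.1 ∧ w.2 ≠ x.2 ∧ w.2 ≠ x.1) ∧
            (memAF F y.1 ∧ y.2 = x.2 ∧ z.1 = w.2 ∧ z.2 = y.1 ∧
              fle x.2 y.1 ∧ fle y.1 w.2 ∧ y.1 ≠ x.2 ∧ y.1 ≠ w.2) then 1 else 0) := by
      by_cases h : (memAF F w.2 ∧ w.1 = x.1 ∧ fle x.2 w.2 ∧ fle w.2 x.1 ∧ w.2 ≠ x.2 ∧ w.2 ≠ x.1)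
      · have hne : ((w.2, x.2) : QEl A) ≠ ((∅, ∅) : QEl A) := by
          rw [Ne, Prod.mk.injEq]
          rintro ⟨h1, h2⟩
          exact h.2.2.2.2.1 (h1.trans h2.symm)
        rw [if_pos h, deltaF_ne F ((w.2, x.2) : QEl A) hne y z]
        simp [h]
      · simp [h]
    have s1 : (if y = x then deltaF F ((∅, ∅) : QEl A) (z, w) else 0) =
        (if y = x ∧ (z = ((∅, ∅) : QEl A) ∧ w = ((∅, ∅) : QEl A)) then (1 : ℂ) else 0) := by
      by_cases h : y = x
      · rw [if_pos h, deltaF_bot]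
        simp [h]
      · simp [h]
    have s2 : (if y = ((∅, ∅) : QEl A) then deltaF F x (z, w) else 0) =
        (if y = ((∅, ∅) : QEl A) ∧ (z = x ∧ w = ((∅, ∅) : QEl A)) then (1 : ℂ) else 0) +
        (if y = ((∅, ∅) : QEl A) ∧ (z = ((∅, ∅) : QEl A) ∧ w = x) then 1 else 0) +
        (if y = ((∅, ∅) : QEl A) ∧ (memAF F z.1 ∧ z.2 = x.2 ∧ w.1 = x.1 ∧ w.2 = z.1 ∧
            fle x.2 z.1 ∧ fle z.1 x.1 ∧ z.1 ≠ x.2 ∧ z.1 ≠ x.1) then 1 else 0) := by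
      by_cases h : y = ((∅, ∅) : QEl A)
      · rw [if_pos h, deltaF_ne F x hxe z w]
        simp [h]
      · simp [h]
    have s3 : (if (memAF F y.1 ∧ y.2 = x.2 ∧ fle x.2 y.1 ∧ fle y.1 x.1 ∧ y.1 ≠ x.2 ∧ y.1 ≠ x.1)
          then deltaF F ((x.1, y.1) : QEl A) (z, w) else 0) =
        (if (memAF F y.1 ∧ y.2 = x.2 ∧ fle x.2 y.1 ∧ fle y.1 x.1 ∧ y.1 ≠ x.2 ∧ y.1 ≠ x.1) ∧
            (z = ((x.1, y.1) : QEl A) ∧ w = ((∅, ∅) : QEl A)) then (1 : ℂ) else 0) +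
        (if (memAF F y.1 ∧ y.2 = x.2 ∧ fle x.2 y.1 ∧ fle y.1 x.1 ∧ y.1 ≠ x.2 ∧ y.1 ≠ x.1) ∧
            (z = ((∅, ∅) : QEl A) ∧ w = ((x.1, y.1) : QEl A)) then 1 else 0) +
        (if (memAF F y.1 ∧ y.2 = x.2 ∧ fle x.2 y.1 ∧ fle y.1 x.1 ∧ y.1 ≠ x.2 ∧ y.1 ≠ x.1) ∧
            (memAF F z.1 ∧ z.2 = y.1 ∧ w.1 = x.1 ∧ w.2 = z.1 ∧
              fle y.1 z.1 ∧ fle z.1 x.1 ∧ z.1 ≠ y.1 ∧ z.1 ≠ x.1) then 1 else 0) := by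
      by_cases h : (memAF F y.1 ∧ y.2 = x.2 ∧ fle x.2 y.1 ∧ fle y.1 x.1 ∧ y.1 ≠ x.2 ∧ y.1 ≠ x.1)
      · have hne : ((x.1, y.1) : QEl A) ≠ ((∅, ∅) : QEl A) := by
          rw [Ne, Prod.mk.injEq]
          rintro ⟨h1, h2⟩
          have hy1 : y.1 = ∅ := fle_bot (h1 ▸ h.2.2.2.1)
          have hx2 : x.2 = ∅ := fle_bot (hy1 ▸ h.2.2.1)
          exact h.2.2.2.2.1 (hy1.trans hx2.symm)
        rw [if_pos h, deltaF_ne F ((x.1, y.1) : QEl A) hne z w]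
        simp [h]
      · simp [h]
    rw [t1, t2, t3, s1, s2, s3]
    -- the seven matching iffs
    have i1 : (w = ((∅, ∅) : QEl A) ∧ (y = x ∧ z = ((∅, ∅) : QEl A))) ↔
        (y = x ∧ (z = ((∅, ∅) : QEl A) ∧ w = ((∅, ∅) : QEl A))) := by tauto
    have i2 : (w = ((∅, ∅) : QEl A) ∧ (y = ((∅, ∅) : QEl A) ∧ z = x)) ↔
        (y = ((∅, ∅) : QEl A) ∧ (z = x ∧ w = ((∅, ∅) : QEl A))) := by tauto
    have i3 : (w = ((∅, ∅) : QEl A) ∧ (memAF F y.1 ∧ y.2 = x.2 ∧ z.1 = x.1 ∧ z.2 = y.1 ∧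
          fle x.2 y.1 ∧ fle y.1 x.1 ∧ y.1 ≠ x.2 ∧ y.1 ≠ x.1)) ↔
        ((memAF F y.1 ∧ y.2 = x.2 ∧ fle x.2 y.1 ∧ fle y.1 x.1 ∧ y.1 ≠ x.2 ∧ y.1 ≠ x.1) ∧
          (z = ((x.1, y.1) : QEl A) ∧ w = ((∅, ∅) : QEl A))) := by
      constructor
      · rintro ⟨hw, m, h1, h2, h3, h4, h5, h6, h7⟩
        exact ⟨⟨m, h1, h4, h5, h6, h7⟩, Prod.ext h2 h3, hw⟩
      · rintro ⟨⟨m, h1, h4, h5, h6, h7⟩, hz, hw⟩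
        subst hz
        exact ⟨hw, m, h1, rfl, rfl, h4, h5, h6, h7⟩
    have i4 : (w = x ∧ (y = ((∅, ∅) : QEl A) ∧ z = ((∅, ∅) : QEl A))) ↔
        (y = ((∅, ∅) : QEl A) ∧ (z = ((∅, ∅) : QEl A) ∧ w = x)) := by tauto
    have i5 : ((memAF F w.2 ∧ w.1 = x.1 ∧ fle x.2 w.2 ∧ fle w.2 x.1 ∧ w.2 ≠ x.2 ∧ w.2 ≠ x.1) ∧
          (y = ((w.2, x.2) : QEl A) ∧ z = ((∅, ∅) : QEl A))) ↔
        ((memAF F y.1 ∧ y.2 = x.2 ∧ fle x.2 y.1 ∧ fle y.1 x.1 ∧ y.1 ≠ x.2 ∧ y.1 ≠ x.1) ∧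
          (z = ((∅, ∅) : QEl A) ∧ w = ((x.1, y.1) : QEl A))) := by
      constructor
      · rintro ⟨⟨m, h1, h2, h3, h4, h5⟩, hy, hz⟩
        subst hy
        exact ⟨⟨m, rfl, h2, h3, h4, h5⟩, hz, Prod.ext h1 rfl⟩
      · rintro ⟨⟨m, h1, h2, h3, h4, h5⟩, hz, hw⟩
        subst hw
        exact ⟨⟨m, rfl, h2, h3, h4, h5⟩, Prod.ext rfl h1, hz⟩
    have i6 : ((memAF F w.2 ∧ w.1 = x.1 ∧ fle x.2 w.2 ∧ fle w.2 x.1 ∧ w.2 ≠ x.2 ∧ w.2 ≠ x.1) ∧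
          (y = ((∅, ∅) : QEl A) ∧ z = ((w.2, x.2) : QEl A))) ↔
        (y = ((∅, ∅) : QEl A) ∧ (memAF F z.1 ∧ z.2 = x.2 ∧ w.1 = x.1 ∧ w.2 = z.1 ∧
          fle x.2 z.1 ∧ fle z.1 x.1 ∧ z.1 ≠ x.2 ∧ z.1 ≠ x.1)) := by
      constructor
      · rintro ⟨⟨m, h1, h2, h3, h4, h5⟩, hy, hz⟩
        subst hz
        exact ⟨hy, m, rfl, h1, rfl, h2, h3, h4, h5⟩
      · rintro ⟨hy, m, h1, h2, h3, h4, h5, h6, h7⟩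
        refine ⟨⟨?_, h2, ?_, ?_, ?_, ?_⟩, hy, Prod.ext h3.symm h1⟩ <;> rw [h3] <;> assumption
    have i7 : ((memAF F w.2 ∧ w.1 = x.1 ∧ fle x.2 w.2 ∧ fle w.2 x.1 ∧ w.2 ≠ x.2 ∧ w.2 ≠ x.1) ∧
          (memAF F y.1 ∧ y.2 = x.2 ∧ z.1 = w.2 ∧ z.2 = y.1 ∧
            fle x.2 y.1 ∧ fle y.1 w.2 ∧ y.1 ≠ x.2 ∧ y.1 ≠ w.2)) ↔
        ((memAF F y.1 ∧ y.2 = x.2 ∧ fle x.2 y.1 ∧ fle y.1 x.1 ∧ y.1 ≠ x.2 ∧ y.1 ≠ x.1) ∧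
          (memAF F z.1 ∧ z.2 = y.1 ∧ w.1 = x.1 ∧ w.2 = z.1 ∧
            fle y.1 z.1 ∧ fle z.1 x.1 ∧ z.1 ≠ y.1 ∧ z.1 ≠ x.1)) := by
      constructor
      · rintro ⟨⟨mw, hw1, g1, g2, k1, k2⟩, my, hy2, hz1, hz2, f1, f2, n1, n2⟩
        exact ⟨⟨my, hy2, f1, fle_trans' f2 g2, n1,
            fun h => n2 (fle_antisymm' my mw f2 (by rw [h]; exact g2))⟩,
          by rw [hz1]; exact mw, hz2, hw1, hz1.symm,
          by rw [hz1]; exact f2, by rw [hz1]; exact g2,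
          by rw [hz1]; exact fun h => n2 h.symm, by rw [hz1]; exact k2⟩
      · rintro ⟨⟨my, hy2, f1, fY, n1, nY⟩, mz, hz2, hw1, hw2, ff1, ff2, nn1, nn2⟩
        exact ⟨⟨by rw [hw2]; exact mz, hw1,
            by rw [hw2]; exact fle_trans' f1 ff1, by rw [hw2]; exact ff2,
            by rw [hw2]; exact fun h => nn1 (fle_antisymm' mz my (by rw [h]; exact f1) ff1),
            by rw [hw2]; exact nn2⟩,
          my, hy2, hw2.symm, hz2, f1, by rw [hw2]; exact ff1,
          n1, by rw [hw2]; exact fun h => nn1 h.symm⟩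
    simp only [i1, i2, i3, i4, i5, i6, i7]
    ring

end ForestHopf
end

section
/- Let M ∈ gl(d,ℂ)₀ (d×d matrices with zero diagonal), and let (Iᵢ) ⊆ (K_λ) be partitions in {1,…,d} (each block of size > 1) with every Iᵢ contained in some K_λ. Setting (J_j) = (K_λ)/(Iᵢ), the quotient matrices satisfy (M/(Iᵢ))/(J_j) = M/(K_λ) and (M/(Iᵢ))_{(J_j)} = M_{(K_λ)}/(Iᵢ). Here M/I is obtained from M by deleting rows/columns in I, adjoining one new row and column indexed by an ideal index whose entries are the sums of the deleted entries (row-sums and column-sums over I against indices outside I), and M_I is the principal submatrix on I. -/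
open scoped Classical

namespace MatQuot

variable {d : ℕ}

/-- Generic quotient (collapsing) of a matrix `N` along a family of blocks `D`: the
quotient matrix is indexed by the blocks, has zero diagonal, and its off-diagonal entries
are the sums of the entries of `N` between the two blocks. -/
noncomputable def quotQ {ι κ : Type*} (N : Matrix ι ι ℂ) (D : κ → Finset ι) :
    Matrix κ κ ℂ :=
  Matrix.of fun a b => if a = b then 0 else ∑ i ∈ D a, ∑ j ∈ D b, N i j

/-- The block family of the quotient by the partition `I₁,…,I_l`: the index set consists of
the indices lying in no `Iᵢ` (as singleton blocks) together with one ideal index per block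
`Iᵢ`. -/
def blkFam {l : ℕ} (I : Fin l → Finset (Fin d)) :
    ({j : Fin d // ∀ i, j ∉ I i} ⊕ Fin l) → Finset (Fin d)
  | Sum.inl j => {j.1}
  | Sum.inr i => I i

/-- The block-diagonal part `M_{(K)}` of `M` with respect to the partition `(K_λ)`. -/
noncomputable def bdiag (M : Matrix (Fin d) (Fin d) ℂ) {m : ℕ}
    (K : Fin m → Finset (Fin d)) : Matrix (Fin d) (Fin d) ℂ :=
  Matrix.of fun i j => if ∃ lam, i ∈ K lam ∧ j ∈ K lam then M i j else 0

lemma blk_nonempty {l : ℕ} {I : Fin l → Finset (Fin d)} (hI1 : ∀ i, 1 < (I i).card)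
    (a : {j : Fin d // ∀ i, j ∉ I i} ⊕ Fin l) : (blkFam I a).Nonempty := by
  cases a with
  | inl j => exact ⟨j.1, Finset.mem_singleton_self _⟩
  | inr i => exact Finset.card_pos.mp (lt_trans one_pos (hI1 i))

lemma blk_disjoint {l : ℕ} {I : Fin l → Finset (Fin d)}
    (hId : ∀ i j, i ≠ j → Disjoint (I i) (I j)) :
    ∀ a b, a ≠ b → Disjoint (blkFam I a) (blkFam I b) := by
  intro a b hab
  cases a with
  | inl j =>
    cases b with
    | inl j' =>
      simp only [blkFam, Finset.disjoint_singleton_left, Finset.mem_singleton]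
      exact fun h => hab (by rw [Sum.inl.injEq]; exact Subtype.ext h)
    | inr i =>
      simp only [blkFam, Finset.disjoint_singleton_left]
      exact j.2 i
  | inr i =>
    cases b with
    | inl j =>
      simp only [blkFam, Finset.disjoint_singleton_right]
      exact j.2 i
    | inr i' =>
      exact hId i i' (fun h => hab (by rw [h]))

lemma blk_exists {l : ℕ} (I : Fin l → Finset (Fin d)) (x : Fin d) :
    ∃ a, x ∈ blkFam I a := by
  by_cases h : ∃ i, x ∈ I i
  · obtain ⟨i, hi⟩ := h; exact ⟨Sum.inr i, hi⟩
  · push_neg at h; exact ⟨Sum.inl ⟨x, h⟩, Finset.mem_singleton_self _⟩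

lemma block_sub {l m : ℕ} {I : Fin l → Finset (Fin d)} {K : Fin m → Finset (Fin d)}
    (hKd : ∀ a b, a ≠ b → Disjoint (K a) (K b))
    (hIK : ∀ i, ∃ lam, I i ⊆ K lam)
    (a : {j : Fin d // ∀ i, j ∉ I i} ⊕ Fin l)
    (c : {j : Fin d // ∀ lam, j ∉ K lam} ⊕ Fin m)
    (x : Fin d) (hxa : x ∈ blkFam I a) (hxc : x ∈ blkFam K c) :
    blkFam I a ⊆ blkFam K c := by
  cases a with
  | inl j =>
    simp only [blkFam, Finset.mem_singleton] at hxa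
    intro y hy
    simp only [blkFam, Finset.mem_singleton] at hy
    rw [hy, ← hxa]; exact hxc
  | inr i =>
    obtain ⟨lam, hlam⟩ := hIK i
    have hx : x ∈ K lam := hlam hxa
    cases c with
    | inl j' =>
      simp only [blkFam, Finset.mem_singleton] at hxc
      exact absurd (hxc ▸ hx) (j'.2 lam)
    | inr mu =>
      have hlm : lam = mu := by
        by_contra h
        exact absurd hxc (Finset.disjoint_left.mp (hKd lam mu h) hx)
      rw [← hlm]; exact hlam

lemma biUnion_eq {l m : ℕ} {I : Fin l → Finset (Fin d)} {K : Fin m → Finset (Fin d)}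
    (hKd : ∀ a b, a ≠ b → Disjoint (K a) (K b))
    (hIK : ∀ i, ∃ lam, I i ⊆ K lam)
    (c : {j : Fin d // ∀ lam, j ∉ K lam} ⊕ Fin m) :
    (Finset.univ.filter (fun a => blkFam I a ⊆ blkFam K c)).biUnion (blkFam I)
      = blkFam K c := by
  ext x
  simp only [Finset.mem_biUnion, Finset.mem_filter, Finset.mem_univ, true_and]
  constructor
  · rintro ⟨a, hsub, hx⟩; exact hsub hx
  · intro hx
    obtain ⟨a, ha⟩ := blk_exists I x
    exact ⟨a, block_sub hKd hIK a c x ha hx, ha⟩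

/-- Proposition 5.1: let `M ∈ gl(d,ℂ)₀` and `(Iᵢ) ⊆ (K_λ)` partitions in
`{1,…,d}` with blocks of size `> 1`, every `Iᵢ` inside some `K_λ`.  With
`(J_j) = (K_λ)/(Iᵢ)` (encoded as grouping the quotient indices of `M/(Iᵢ)` according to the
blocks `K_λ`), one has `(M/(Iᵢ))/(J_j) = M/(K_λ)` and `(M/(Iᵢ))_{(J_j)} = M_{(K_λ)}/(Iᵢ)`. -/
theorem matrix_quotient_of_quotient {l m : ℕ}
    (M : Matrix (Fin d) (Fin d) ℂ) (hM : ∀ i, M i i = 0)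
    (I : Fin l → Finset (Fin d)) (K : Fin m → Finset (Fin d))
    (hI1 : ∀ i, 1 < (I i).card) (hK1 : ∀ lam, 1 < (K lam).card)
    (hId : ∀ i j, i ≠ j → Disjoint (I i) (I j))
    (hKd : ∀ a b, a ≠ b → Disjoint (K a) (K b))
    (hIK : ∀ i, ∃ lam, I i ⊆ K lam) :
    quotQ (quotQ M (blkFam I))
        (fun c : ({j : Fin d // ∀ lam, j ∉ K lam} ⊕ Fin m) =>
          Finset.univ.filter (fun a => blkFam I a ⊆ blkFam K c))
      = quotQ M (blkFam K) ∧
    (Matrix.of fun a b =>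
        if ∃ c : ({j : Fin d // ∀ lam, j ∉ K lam} ⊕ Fin m),
            a ∈ Finset.univ.filter (fun a' => blkFam I a' ⊆ blkFam K c) ∧
            b ∈ Finset.univ.filter (fun a' => blkFam I a' ⊆ blkFam K c)
          then quotQ M (blkFam I) a b else 0)
      = quotQ (bdiag M K) (blkFam I) := by
  constructor
  · ext c c'
    simp only [quotQ, Matrix.of_apply]
    by_cases hcc : c = c'
    · simp [hcc]
    · rw [if_neg hcc, if_neg hcc]
      set S : ({j : Fin d // ∀ lam, j ∉ K lam} ⊕ Fin m) → Finset _ :=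
        fun c => Finset.univ.filter (fun a => blkFam I a ⊆ blkFam K c) with hS
      have h1 : ∀ a ∈ S c, ∀ b ∈ S c', a ≠ b := by
        intro a ha b hb hEq
        subst hEq
        simp only [hS, Finset.mem_filter, Finset.mem_univ, true_and] at ha hb
        obtain ⟨x, hx⟩ := blk_nonempty hI1 a
        exact absurd (hb hx)
          (Finset.disjoint_left.mp (blk_disjoint hKd c c' hcc) (ha hx))
      have hdI : ∀ c₀, Set.PairwiseDisjoint (↑(S c₀)) (blkFam I) := by
        intro c₀ a _ b _ hab
        exact blk_disjoint hId a b hab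
      show (∑ a ∈ S c, ∑ b ∈ S c',
              (@ite ℂ (a = b) (Classical.propDecidable _) 0
                (∑ i ∈ blkFam I a, ∑ j ∈ blkFam I b, M i j)))
          = ∑ i ∈ blkFam K c, ∑ j ∈ blkFam K c', M i j
      calc (∑ a ∈ S c, ∑ b ∈ S c',
              (@ite ℂ (a = b) (Classical.propDecidable _) 0
                (∑ i ∈ blkFam I a, ∑ j ∈ blkFam I b, M i j)))
          = ∑ a ∈ S c, ∑ b ∈ S c', ∑ i ∈ blkFam I a, ∑ j ∈ blkFam I b, M i j := by
            refine Finset.sum_congr rfl fun a ha => Finset.sum_congr rfl fun b hb => ?_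
            rw [if_neg (h1 a ha b hb)]
        _ = ∑ a ∈ S c, ∑ i ∈ blkFam I a, ∑ b ∈ S c', ∑ j ∈ blkFam I b, M i j := by
            exact Finset.sum_congr rfl fun a _ => Finset.sum_comm
        _ = ∑ i ∈ (S c).biUnion (blkFam I), ∑ j ∈ (S c').biUnion (blkFam I), M i j := by
            rw [Finset.sum_biUnion (hdI c)]
            refine Finset.sum_congr rfl fun a _ => Finset.sum_congr rfl fun i _ => ?_
            rw [Finset.sum_biUnion (hdI c')]
        _ = ∑ i ∈ blkFam K c, ∑ j ∈ blkFam K c', M i j := by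
            rw [hS]
            rw [biUnion_eq hKd hIK c, biUnion_eq hKd hIK c']
  · ext a b
    simp only [Matrix.of_apply, quotQ, bdiag]
    rcases eq_or_ne a b with rfl | hab
    · simp
    · rw [if_neg hab, if_neg hab]
      have key : ∀ i ∈ blkFam I a, ∀ j ∈ blkFam I b,
          ((∃ lam, i ∈ K lam ∧ j ∈ K lam) ↔
            ∃ lam, blkFam I a ⊆ K lam ∧ blkFam I b ⊆ K lam) := by
        intro i hi j hj
        constructor
        · rintro ⟨lam, h1, h2⟩
          exact ⟨lam, block_sub hKd hIK a (Sum.inr lam) i hi h1,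
                 block_sub hKd hIK b (Sum.inr lam) j hj h2⟩
        · rintro ⟨lam, h1, h2⟩; exact ⟨lam, h1 hi, h2 hj⟩
      have cond : (∃ c : ({j : Fin d // ∀ lam, j ∉ K lam} ⊕ Fin m),
            a ∈ Finset.univ.filter (fun a' => blkFam I a' ⊆ blkFam K c) ∧
            b ∈ Finset.univ.filter (fun a' => blkFam I a' ⊆ blkFam K c)) ↔
          ∃ lam, blkFam I a ⊆ K lam ∧ blkFam I b ⊆ K lam := by
        constructor
        · rintro ⟨c, hc1, hc2⟩
          simp only [Finset.mem_filter, Finset.mem_univ, true_and] at hc1 hc2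
          cases c with
          | inl j' =>
            exfalso
            obtain ⟨x, hx⟩ := blk_nonempty hI1 a
            obtain ⟨y, hy⟩ := blk_nonempty hI1 b
            have hx' : x = j'.1 := by
              have := hc1 hx; simpa [blkFam] using this
            have hy' : y = j'.1 := by
              have := hc2 hy; simpa [blkFam] using this
            have hxy : x = y := hx'.trans hy'.symm
            refine absurd ?_ (Finset.disjoint_left.mp (blk_disjoint hId a b hab) hx)
            rw [hxy]; exact hy
          | inr lam => exact ⟨lam, hc1, hc2⟩
        · rintro ⟨lam, h1, h2⟩
          refine ⟨Sum.inr lam, ?_, ?_⟩ <;>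
            simp only [Finset.mem_filter, Finset.mem_univ, true_and, blkFam]
          · exact Finset.mem_filter.mpr ⟨Finset.mem_univ _, h1⟩
          · exact Finset.mem_filter.mpr ⟨Finset.mem_univ _, h2⟩
      by_cases hP : ∃ lam, blkFam I a ⊆ K lam ∧ blkFam I b ⊆ K lam
      · rw [if_pos (cond.mpr hP)]
        refine Finset.sum_congr rfl fun i hi => Finset.sum_congr rfl fun j hj => ?_
        rw [if_pos ((key i hi j hj).mpr hP)]
      · rw [if_neg (fun h => hP (cond.mp h))]
        symm
        refine Finset.sum_eq_zero fun i hi => Finset.sum_eq_zero fun j hj => ?_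
        rw [if_neg (fun h => hP ((key i hi j hj).mp h))]

end MatQuot
end
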